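/- Let n ≥ 1 and let x, y : {1,…,n} → {0,1}. In the graph Split(x,y): if there is no index i with x_i = y_i = 1, then every two vertices are at distance at most 2; if there is an index i with x_i = y_i = 1, then dist(a'_i, b'_i) ≥ 3. Hence the diameter of Split(x,y) is at most 2 if and only if there is no index i with x_i = y_i = 1. -/
import Mathlib

inductive SpVert (n : ℕ) : Type
  | A : Fin (n + 1) → SpVert n
  | B : Fin (n + 1) → SpVert n
  | A' : Fin n → SpVert n
  | B' : Fin n → SpVert n

def spRel {n : ℕ} (x y : Fin n → Fin 2) : SpVert n → SpVert n → Prop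
  | .A _, .A _ => True
  | .B _, .B _ => True
  | .A _, .B _ => True
  | .A k, .B' j => k ≠ j.succ
  | .B k, .A' j => k ≠ j.succ
  | .A k, .A' i => (x i = 1 ∧ k = i.succ) ∨ (x i = 0 ∧ k = 0)
  | .B k, .B' i => (y i = 1 ∧ k = i.succ) ∨ (y i = 0 ∧ k = 0)
  | _, _ => False

def SpGraph {n : ℕ} (x y : Fin n → Fin 2) : SimpleGraph (SpVert n) :=
  SimpleGraph.fromRel (spRel x y)

open SimpleGraph SpVert

section Aux

variable {n : ℕ} {x y : Fin n → Fin 2}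

lemma sp_adj (u w : SpVert n) :
    (SpGraph x y).Adj u w ↔ u ≠ w ∧ (spRel x y u w ∨ spRel x y w u) :=
  SimpleGraph.fromRel_adj _ _ _

lemma adj_AB (j k : Fin (n+1)) : (SpGraph x y).Adj (A j) (B k) :=
  (sp_adj _ _).2 ⟨by simp, Or.inl trivial⟩

lemma adj_AA {j k : Fin (n+1)} (h : j ≠ k) : (SpGraph x y).Adj (A j) (A k) :=
  (sp_adj _ _).2 ⟨by simpa using h, Or.inl trivial⟩

lemma adj_BB {j k : Fin (n+1)} (h : j ≠ k) : (SpGraph x y).Adj (B j) (B k) :=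
  (sp_adj _ _).2 ⟨by simpa using h, Or.inl trivial⟩

lemma adj_AB' {k : Fin (n+1)} {i : Fin n} (h : k ≠ i.succ) :
    (SpGraph x y).Adj (A k) (B' i) :=
  (sp_adj _ _).2 ⟨by simp, Or.inl h⟩

lemma adj_BA' {k : Fin (n+1)} {i : Fin n} (h : k ≠ i.succ) :
    (SpGraph x y).Adj (B k) (A' i) :=
  (sp_adj _ _).2 ⟨by simp, Or.inl h⟩

lemma adj_A0B' (i : Fin n) : (SpGraph x y).Adj (A 0) (B' i) :=
  adj_AB' (Fin.succ_ne_zero i).symm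

lemma adj_B0A' (i : Fin n) : (SpGraph x y).Adj (B 0) (A' i) :=
  adj_BA' (Fin.succ_ne_zero i).symm

lemma adj_AA'_one {i : Fin n} (h : x i = 1) : (SpGraph x y).Adj (A i.succ) (A' i) :=
  (sp_adj _ _).2 ⟨by simp, Or.inl (Or.inl ⟨h, rfl⟩)⟩

lemma adj_AA'_zero {i : Fin n} (h : x i = 0) : (SpGraph x y).Adj (A 0) (A' i) :=
  (sp_adj _ _).2 ⟨by simp, Or.inl (Or.inr ⟨h, rfl⟩)⟩

lemma adj_BB'_one {i : Fin n} (h : y i = 1) : (SpGraph x y).Adj (B i.succ) (B' i) :=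
  (sp_adj _ _).2 ⟨by simp, Or.inl (Or.inl ⟨h, rfl⟩)⟩

lemma adj_BB'_zero {i : Fin n} (h : y i = 0) : (SpGraph x y).Adj (B 0) (B' i) :=
  (sp_adj _ _).2 ⟨by simp, Or.inl (Or.inr ⟨h, rfl⟩)⟩

lemma dist_le_one {V : Type*} {G : SimpleGraph V} {u w : V} (h : G.Adj u w) :
    G.dist u w ≤ 1 := by
  simpa using SimpleGraph.dist_le h.toWalk

lemma dist_le_two {V : Type*} {G : SimpleGraph V} {u z w : V}
    (h1 : G.Adj u z) (h2 : G.Adj z w) : G.dist u w ≤ 2 := by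
  simpa using SimpleGraph.dist_le (SimpleGraph.Walk.cons h1 (SimpleGraph.Walk.cons h2 SimpleGraph.Walk.nil))

lemma three_le_dist {V : Type*} {G : SimpleGraph V} {u w : V} (hr : G.Reachable u w)
    (hne : u ≠ w) (hadj : ¬ G.Adj u w)
    (hcom : ∀ z, ¬ (G.Adj u z ∧ G.Adj z w)) : 3 ≤ G.dist u w := by
  obtain ⟨p, hp⟩ := hr.exists_walk_length_eq_dist
  rw [← hp]
  match p with
  | .nil => exact absurd rfl hne
  | .cons h .nil => exact absurd h hadj
  | .cons h (.cons h' .nil) => exact absurd ⟨h, h'⟩ (hcom _)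
  | .cons h (.cons h' (.cons h'' q)) =>
      simp only [SimpleGraph.Walk.length_cons]; omega

lemma fin2 (a : Fin 2) : a = 0 ∨ a = 1 := by omega

lemma sp_part2 {i : Fin n} (hx : x i = 1) (hy : y i = 1) :
    3 ≤ (SpGraph x y).dist (A' i) (B' i) := by
  apply three_le_dist
  · exact ⟨SimpleGraph.Walk.cons (adj_B0A' i).symm
      (SimpleGraph.Walk.cons (adj_AB 0 0).symm
        (SimpleGraph.Walk.cons (adj_A0B' i) SimpleGraph.Walk.nil))⟩
  · simp
  · rw [sp_adj]
    rintro ⟨-, h | h⟩ <;> exact h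
  · rintro (k | k | j | j) ⟨h1, h2⟩
    · rw [sp_adj] at h1 h2
      have hk : k ≠ i.succ := by
        rcases h2.2 with h | h
        · exact h
        · exact h.elim
      rcases h1.2 with h | h
      · exact h.elim
      · rcases h with ⟨-, h⟩ | ⟨h0, -⟩
        · exact hk h
        · rw [hx] at h0; exact absurd h0 (by decide)
    · rw [sp_adj] at h1 h2
      have hk : k ≠ i.succ := by
        rcases h1.2 with h | h
        · exact h.elim
        · exact h
      rcases h2.2 with h | h
      · rcases h with ⟨-, h⟩ | ⟨h0, -⟩
        · exact hk h
        · rw [hy] at h0; exact absurd h0 (by decide)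
      · exact h.elim
    · rw [sp_adj] at h1
      rcases h1.2 with h | h <;> exact h.elim
    · rw [sp_adj] at h2
      rcases h2.2 with h | h <;> exact h.elim

lemma sp_part1 (hno : ¬ ∃ i, x i = 1 ∧ y i = 1) (u w : SpVert n) :
    (SpGraph x y).dist u w ≤ 2 := by
  have key : ∀ i : Fin n, x i = 0 ∨ y i = 0 := by
    intro i
    rcases fin2 (x i) with h | h
    · exact Or.inl h
    · rcases fin2 (y i) with h' | h'
      · exact Or.inr h'
      · exact absurd ⟨i, h, h'⟩ hno
  rcases u with j | j | i | i <;> rcases w with k | k | m | m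
  · by_cases h : j = k
    · subst h; simp [SimpleGraph.dist_self]
    · exact (dist_le_one (adj_AA h)).trans (by norm_num)
  · exact (dist_le_one (adj_AB j k)).trans (by norm_num)
  · exact dist_le_two (adj_AB j 0) (adj_B0A' m)
  · by_cases h : j = m.succ
    · subst h
      exact dist_le_two (adj_AA (Fin.succ_ne_zero m)) (adj_A0B' m)
    · exact (dist_le_one (adj_AB' h)).trans (by norm_num)
  · exact (dist_le_one (adj_AB k j).symm).trans (by norm_num)
  · by_cases h : j = k
    · subst h; simp [SimpleGraph.dist_self]
    · exact (dist_le_one (adj_BB h)).trans (by norm_num)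
  · by_cases h : j = m.succ
    · subst h
      exact dist_le_two (adj_BB (Fin.succ_ne_zero m)) (adj_B0A' m)
    · exact (dist_le_one (adj_BA' h)).trans (by norm_num)
  · exact dist_le_two (adj_AB 0 j).symm (adj_A0B' m)
  · exact dist_le_two (adj_B0A' i).symm (adj_AB k 0).symm
  · by_cases h : k = i.succ
    · subst h
      exact dist_le_two (adj_B0A' i).symm (adj_BB (Fin.succ_ne_zero i).symm)
    · exact (dist_le_one (adj_BA' h).symm).trans (by norm_num)
  · by_cases h : i = m
    · subst h; simp [SimpleGraph.dist_self]
    · exact dist_le_two (adj_B0A' i).symm (adj_B0A' m)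
  · by_cases h : i = m
    · subst h
      rcases key i with h0 | h0
      · exact dist_le_two (adj_AA'_zero h0).symm (adj_A0B' i)
      · exact dist_le_two (adj_B0A' i).symm (adj_BB'_zero h0)
    · rcases fin2 (x i) with h0 | h0
      · exact dist_le_two (adj_AA'_zero h0).symm (adj_A0B' m)
      · exact dist_le_two (adj_AA'_one h0).symm
          (adj_AB' (fun hh => h (Fin.succ_injective _ hh)))
  · by_cases h : k = i.succ
    · subst h
      exact dist_le_two (adj_A0B' i).symm (adj_AA (Fin.succ_ne_zero i).symm)
    · exact (dist_le_one (adj_AB' h).symm).trans (by norm_num)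
  · exact dist_le_two (adj_A0B' i).symm (adj_AB 0 k)
  · by_cases h : i = m
    · subst h
      rcases key i with h0 | h0
      · exact dist_le_two (adj_A0B' i).symm (adj_AA'_zero h0)
      · exact dist_le_two (adj_BB'_zero h0).symm (adj_B0A' i)
    · rcases fin2 (x m) with h0 | h0
      · exact dist_le_two (adj_A0B' i).symm (adj_AA'_zero h0)
      · exact dist_le_two
          (adj_AB' (fun hh => h (Fin.succ_injective _ hh).symm)).symm (adj_AA'_one h0)
  · by_cases h : i = m
    · subst h; simp [SimpleGraph.dist_self]
    · exact dist_le_two (adj_A0B' i).symm (adj_A0B' m)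

end Aux

theorem stmt_10 {n : ℕ} (hn : 1 ≤ n) (x y : Fin n → Fin 2) :
    ((¬ ∃ i, x i = 1 ∧ y i = 1) →
      ∀ u w : SpVert n, (SpGraph x y).dist u w ≤ 2) ∧
    (∀ i : Fin n, x i = 1 → y i = 1 →
      3 ≤ (SpGraph x y).dist (SpVert.A' i) (SpVert.B' i)) ∧
    ((∀ u w : SpVert n, (SpGraph x y).dist u w ≤ 2) ↔
      ¬ ∃ i, x i = 1 ∧ y i = 1) := by
  refine ⟨sp_part1, fun i hx hy => sp_part2 hx hy, ?_, sp_part1⟩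
  intro hall
  rintro ⟨i, hx, hy⟩
  have h3 := sp_part2 (x := x) (y := y) hx hy
  have h2 := hall (SpVert.A' i) (SpVert.B' i)
  omega
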